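/- Let g be an integer with 1 ≤ n ≤ g, and suppose that for every i with 2 ≤ i ≤ n and every u with 1 ≤ u ≤ g − i the coefficient of t^{2(i+u)−1} in F*_{i,u} vanishes. Then every nonzero element of the ℂ-subalgebra ℂ[f_1, …, f_n] of ℂ⟦t⟧ has t-adic order lying in the hyperelliptic numerical semigroup ⟨2, 2g+1⟩ = {0, 2, 4, 6, …} ∪ {m odd : m ≥ 2g+1}; equivalently, no element of ℂ[f_1, …, f_n] has odd t-adic order strictly less than 2g+1. -/

import Mathlib

/-- `Fstar f λ r` is the series `F*_{λ,r}`: `F*_{λ,0} = f_λ = f_{i₁}⋯f_{i_s}` and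
`F*_{λ,r} = F*_{λ,r−1} − a(λ,r−1)·f₁^{i_λ+r−1}`, where `a(λ,r)` is the coefficient
of `t^{2(i_λ+r)}` in `F*_{λ,r}`. -/
noncomputable def Fstar (f : ℕ → PowerSeries ℂ) (lam : List ℕ) : ℕ → PowerSeries ℂ
  | 0 => (lam.map f).prod
  | r + 1 =>
      Fstar f lam r -
        PowerSeries.C (PowerSeries.coeff (2 * (lam.sum + r)) (Fstar f lam r)) *
          f 1 ^ (lam.sum + r)

namespace Stmt12Aux

open PowerSeries

lemma low_mul {a b : PowerSeries ℂ} {d e : ℕ}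
    (ha : ∀ m < d, PowerSeries.coeff m a = 0) (hb : ∀ m < e, PowerSeries.coeff m b = 0) :
    ∀ m < d + e, PowerSeries.coeff m (a * b) = 0 := by
  intro m hm
  rw [PowerSeries.coeff_mul]
  apply Finset.sum_eq_zero
  rintro ⟨p, q⟩ hpq
  rw [Finset.HasAntidiagonal.mem_antidiagonal] at hpq
  by_cases hp : p < d
  · simp [ha p hp]
  · have hq : q < e := by omega
    simp [hb q hq]

lemma lead_mul {a b : PowerSeries ℂ} {d e : ℕ}
    (ha : ∀ m < d, PowerSeries.coeff m a = 0) (hb : ∀ m < e, PowerSeries.coeff m b = 0) :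
    PowerSeries.coeff (d + e) (a * b) = PowerSeries.coeff d a * PowerSeries.coeff e b := by
  rw [PowerSeries.coeff_mul]
  apply Finset.sum_eq_single_of_mem (d, e)
  · rw [Finset.HasAntidiagonal.mem_antidiagonal]
  · rintro ⟨p, q⟩ hpq hne
    rw [Finset.HasAntidiagonal.mem_antidiagonal] at hpq
    have hne' : ¬(p = d ∧ q = e) := by simpa [Prod.ext_iff] using hne
    by_cases hp : p < d
    · simp [ha p hp]
    · have hq : q < e := by omega
      simp [hb q hq]

lemma pow_low {f1 : PowerSeries ℂ} (h2 : ∀ m < 2, PowerSeries.coeff m f1 = 0) :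
    ∀ k, ∀ m < 2 * k, PowerSeries.coeff m (f1 ^ k) = 0 := by
  intro k
  induction k with
  | zero => intro m hm; omega
  | succ k ih =>
    intro m hm
    rw [pow_succ]
    exact low_mul ih h2 m (by omega)

lemma pow_lead {f1 : PowerSeries ℂ} (h2 : ∀ m < 2, PowerSeries.coeff m f1 = 0)
    (hl : PowerSeries.coeff 2 f1 = 1) :
    ∀ k, PowerSeries.coeff (2 * k) (f1 ^ k) = 1 := by
  intro k
  induction k with
  | zero => simp
  | succ k ih =>
    rw [pow_succ, show 2 * (k + 1) = 2 * k + 2 by ring, lead_mul (pow_low h2 k) h2, ih, hl,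
      one_mul]

variable (f : ℕ → PowerSeries ℂ)

lemma Fstar_low (h2 : ∀ m < 2, PowerSeries.coeff m (f 1) = 0) {i : ℕ}
    (hi : ∀ m < 2 * i, PowerSeries.coeff m (f i) = 0) :
    ∀ r, ∀ m < 2 * i, PowerSeries.coeff m (Fstar f [i] r) = 0 := by
  intro r
  induction r with
  | zero =>
    intro m hm
    simpa only [Fstar, List.map_cons, List.map_nil, List.prod_cons, List.prod_nil,
      mul_one] using hi m hm
  | succ r ih =>
    intro m hm
    simp only [Fstar, map_sub, PowerSeries.coeff_C_mul, List.sum_cons, List.sum_nil,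
      add_zero]
    rw [ih m hm, pow_low h2 (i + r) m (by omega), mul_zero, sub_zero]

lemma Fstar_agree (h2 : ∀ m < 2, PowerSeries.coeff m (f 1) = 0) (lam : List ℕ)
    {r u : ℕ} (hu : u ≤ r) :
    ∀ m < 2 * (lam.sum + u),
      PowerSeries.coeff m (Fstar f lam r) = PowerSeries.coeff m (Fstar f lam u) := by
  induction r with
  | zero =>
    intro m hm
    obtain rfl : u = 0 := Nat.le_zero.mp hu
    rfl
  | succ r ih =>
    intro m hm
    rcases Nat.eq_or_lt_of_le hu with rfl | hur
    · rfl
    · have hur' : u ≤ r := by omega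
      simp only [Fstar, map_sub, PowerSeries.coeff_C_mul]
      rw [pow_low h2 (lam.sum + r) m (by omega), mul_zero, sub_zero]
      exact ih hur' m hm

lemma Fstar_even (h2 : ∀ m < 2, PowerSeries.coeff m (f 1) = 0)
    (hl : PowerSeries.coeff 2 (f 1) = 1) (lam : List ℕ) {r j : ℕ} (hj : j < r) :
    PowerSeries.coeff (2 * (lam.sum + j)) (Fstar f lam r) = 0 := by
  induction r with
  | zero => omega
  | succ r ih =>
    rcases Nat.lt_succ_iff_lt_or_eq.mp hj with hjr | rfl
    · simp only [Fstar, map_sub, PowerSeries.coeff_C_mul]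
      rw [ih hjr, pow_low h2 (lam.sum + r) _ (by omega), mul_zero, sub_zero]
    · simp only [Fstar, map_sub, PowerSeries.coeff_C_mul]
      rw [pow_lead h2 hl, mul_one, sub_self]

lemma Fstar_poly (lam : List ℕ) (r : ℕ) :
    ∃ q : Polynomial ℂ, (lam.map f).prod - Fstar f lam r = Polynomial.aeval (f 1) q := by
  induction r with
  | zero => exact ⟨0, by simp [Fstar]⟩
  | succ r ih =>
    obtain ⟨q, hq⟩ := ih
    refine ⟨q + Polynomial.C (PowerSeries.coeff (2 * (lam.sum + r)) (Fstar f lam r)) *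
      Polynomial.X ^ (lam.sum + r), ?_⟩
    rw [map_add, map_mul, Polynomial.aeval_C, map_pow, Polynomial.aeval_X, ← hq,
      ← PowerSeries.C_eq_algebraMap]
    show _ - (Fstar f lam r - _) = _
    ring

end Stmt12Aux

open Stmt12Aux in
/-- if `1 ≤ n ≤ g` and the coefficient of `t^{2(i+u)−1}` in `F*_{i,u}`
vanishes for all `2 ≤ i ≤ n` and `1 ≤ u ≤ g − i`, then every nonzero element of the
`ℂ`-subalgebra `ℂ[f₁,…,f_n] ⊆ ℂ⟦t⟧` has `t`-adic order lying in the hyperelliptic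
numerical semigroup `⟨2, 2g+1⟩`, i.e. its order is even or at least `2g+1` (so no
element has odd order strictly less than `2g+1`). -/
theorem stmt_12 (n g : ℕ) (hn : 1 ≤ n) (hng : n ≤ g) (f : ℕ → PowerSeries ℂ)
    (hlead : ∀ i, 1 ≤ i → i ≤ n → PowerSeries.coeff (2 * i) (f i) = 1)
    (hlow : ∀ i, 1 ≤ i → i ≤ n → ∀ m, m < 2 * i → PowerSeries.coeff m (f i) = 0)
    (hvanish : ∀ i, 2 ≤ i → i ≤ n → ∀ u, 1 ≤ u → u ≤ g - i →
      PowerSeries.coeff (2 * (i + u) - 1) (Fstar f [i] u) = 0) :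
    ∀ F ∈ Algebra.adjoin ℂ (f '' Set.Icc 1 n), F ≠ 0 →
      ∃ m : ℕ, PowerSeries.order F = m ∧ (Even m ∨ 2 * g + 1 ≤ m) := by
  have h2 : ∀ m < 2, PowerSeries.coeff m (f 1) = 0 := fun m hm =>
    hlow 1 le_rfl hn m (by omega)
  have hl1 : PowerSeries.coeff 2 (f 1) = 1 := by
    simpa using hlead 1 le_rfl hn
  -- The subalgebra of series agreeing with a polynomial in `f 1` up to degree `2g`.
  set Usub : Subalgebra ℂ (PowerSeries ℂ) :=
    { carrier := {x | ∃ q : Polynomial ℂ, ∀ m ≤ 2 * g,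
        PowerSeries.coeff m x = PowerSeries.coeff m (Polynomial.aeval (f 1) q)}
      mul_mem' := by
        rintro x y ⟨qx, hx⟩ ⟨qy, hy⟩
        refine ⟨qx * qy, fun m hm => ?_⟩
        rw [map_mul (Polynomial.aeval (f 1)) qx qy, PowerSeries.coeff_mul, PowerSeries.coeff_mul]
        apply Finset.sum_congr rfl
        rintro ⟨p, q⟩ hpq
        rw [Finset.HasAntidiagonal.mem_antidiagonal] at hpq
        rw [hx p (by omega), hy q (by omega)]
      add_mem' := by
        rintro x y ⟨qx, hx⟩ ⟨qy, hy⟩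
        refine ⟨qx + qy, fun m hm => ?_⟩
        rw [map_add, map_add, map_add, hx m hm, hy m hm]
      algebraMap_mem' := fun c => ⟨Polynomial.C c, fun m _ => by rw [Polynomial.aeval_C]⟩ }
    with hU
  have hgen : f '' Set.Icc 1 n ⊆ (Usub : Set (PowerSeries ℂ)) := by
    rintro _ ⟨i, ⟨hi1, hin⟩, rfl⟩
    by_cases hi2 : 2 ≤ i
    · -- coefficients of `Fstar f [i] (g - i + 1)` vanish up to degree 2g
      set r : ℕ := g - i + 1 with hr
      have hsum : ([i] : List ℕ).sum = i := by simp
      have hig : i ≤ g := le_trans hin hng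
      have hFhigh : ∀ m ≤ 2 * g, PowerSeries.coeff m (Fstar f [i] r) = 0 := by
        intro m hm
        by_cases hmlow : m < 2 * i
        · exact Fstar_low f h2 (hlow i (by omega) hin) r m hmlow
        · rcases Nat.even_or_odd m with he | ho
          · obtain ⟨c, rfl⟩ := he
            have hj : i ≤ c := by omega
            have h1 : c + c = 2 * (([i] : List ℕ).sum + (c - i)) := by
              simp only [List.sum_cons, List.sum_nil, add_zero]; omega
            rw [h1]
            exact Fstar_even f h2 hl1 [i] (j := c - i) (by omega)
          · obtain ⟨c, rfl⟩ := ho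
            -- m = 2c+1 odd, 2i ≤ m ≤ 2g, so m = 2(i+u)-1 with u = c+1-i, 1 ≤ u ≤ g-i
            set u : ℕ := c + 1 - i with hu
            have hu1 : 1 ≤ u := by omega
            have hu2 : u ≤ g - i := by omega
            have hur : u ≤ r := by omega
            have hv := hvanish i hi2 hin u hu1 hu2
            have hag := Fstar_agree f h2 [i] hur (2 * c + 1)
              (by simp only [List.sum_cons, List.sum_nil, add_zero]; omega)
            rw [hag]
            have heq : 2 * (i + u) - 1 = 2 * c + 1 := by omega
            rw [← heq]
            exact hv
      obtain ⟨q, hq⟩ := Fstar_poly f [i] r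
      refine ⟨q, fun m hm => ?_⟩
      have hfi : f i = Fstar f [i] r + Polynomial.aeval (f 1) q := by
        have h1 : (([i] : List ℕ).map f).prod = f i := by simp
        rw [h1] at hq
        linear_combination hq
      rw [hfi, map_add, hFhigh m hm, zero_add]
    · -- i = 1
      obtain rfl : i = 1 := by omega
      exact ⟨Polynomial.X, fun m _ => by rw [Polynomial.aeval_X]⟩
  have hadj : Algebra.adjoin ℂ (f '' Set.Icc 1 n) ≤ Usub := Algebra.adjoin_le hgen
  intro F hF hF0
  obtain ⟨q, hq⟩ := hadj hF
  have hfin : F.order ≠ ⊤ := fun h => hF0 (PowerSeries.order_eq_top.mp h)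
  obtain ⟨m, hm⟩ := WithTop.ne_top_iff_exists.mp hfin
  refine ⟨m, hm.symm, ?_⟩
  by_cases hmg : 2 * g + 1 ≤ m
  · exact Or.inr hmg
  left
  have hm2g : m ≤ 2 * g := by omega
  obtain ⟨hcm, hlt⟩ := PowerSeries.order_eq_nat.mp hm.symm
  -- the polynomial q is nonzero
  have hq0 : q ≠ 0 := by
    rintro rfl
    exact hcm (by rw [hq m hm2g]; simp)
  set k0 : ℕ := q.natTrailingDegree with hk0
  -- coefficient formula for aeval
  have haeval : ∀ m' : ℕ, PowerSeries.coeff m' (Polynomial.aeval (f 1) q) =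
      ∑ i ∈ Finset.range (q.natDegree + 1),
        q.coeff i * PowerSeries.coeff m' (f 1 ^ i) := by
    intro m'
    rw [Polynomial.aeval_eq_sum_range, map_sum]
    apply Finset.sum_congr rfl
    intro i _
    rw [map_smul, smul_eq_mul]
  have halow : ∀ m' < 2 * k0, PowerSeries.coeff m' (Polynomial.aeval (f 1) q) = 0 := by
    intro m' hm'
    rw [haeval]
    apply Finset.sum_eq_zero
    intro i _
    by_cases hik : i < k0
    · rw [Polynomial.coeff_eq_zero_of_lt_natTrailingDegree hik, zero_mul]
    · rw [pow_low h2 i m' (by omega), mul_zero]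
  have halead : PowerSeries.coeff (2 * k0) (Polynomial.aeval (f 1) q) ≠ 0 := by
    rw [haeval]
    have hmem : k0 ∈ Finset.range (q.natDegree + 1) :=
      Finset.mem_range.mpr (Nat.lt_succ_of_le q.natTrailingDegree_le_natDegree)
    rw [Finset.sum_eq_single_of_mem k0 hmem]
    · rw [pow_lead h2 hl1, mul_one]
      exact Polynomial.trailingCoeff_nonzero_iff_nonzero.mpr hq0
    · intro i _ hik
      rcases Nat.lt_or_ge i k0 with hik' | hik'
      · rw [Polynomial.coeff_eq_zero_of_lt_natTrailingDegree hik', zero_mul]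
      · have : 2 * k0 < 2 * i := by omega
        rw [pow_low h2 i _ this, mul_zero]
  -- conclude m = 2 * k0
  rcases Nat.lt_trichotomy m (2 * k0) with hmk | hmk | hmk
  · exact absurd (by rw [hq m hm2g]; exact halow m hmk) hcm
  · exact ⟨k0, by omega⟩
  · have h2k0 : 2 * k0 ≤ 2 * g := by omega
    exact absurd (by rw [← hq (2 * k0) h2k0]; exact hlt (2 * k0) hmk) halead
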